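/- Let T be a finite tree and let 𝒞 be the set of rooted circuits of its edge-shelling convex geometry. Then 𝒞 satisfies Rule Y: for any pairwise distinct edges x, y, z, u of T, if ({y,z}, u) ∈ 𝒞 then exactly one of ({x,y}, u) ∈ 𝒞 and ({x,z}, u) ∈ 𝒞 holds. -/

import Mathlib

open Set

variable {α : Type*}

/-- A closure system on a ground set `E`: a family of subsets of `E` containing `E`
and closed under pairwise intersection. -/
def IsClosureSystem (E : Set α) (K : Set (Set α)) : Prop :=
  (∀ A ∈ K, A ⊆ E) ∧ E ∈ K ∧ ∀ A ∈ K, ∀ B ∈ K, A ∩ B ∈ K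

/-- The closure operator `τ(X) = ⋂ {A ∈ K : X ⊆ A}`. -/
def closureOp (K : Set (Set α)) (X : Set α) : Set α :=
  ⋂₀ {A | A ∈ K ∧ X ⊆ A}

/-- The extreme operator `ex(X) = {x ∈ X : x ∉ τ(X \ {x})}`. -/
def extremeOp (K : Set (Set α)) (X : Set α) : Set α :=
  {x | x ∈ X ∧ x ∉ closureOp K (X \ {x})}

/-- A rooted circuit `(X, e)` of a closure system `K` on ground set `E`:
`e ∉ X` and `X` is minimal under inclusion with `e ∈ τ(X)`. -/
def IsRootedCircuit (E : Set α) (K : Set (Set α)) (X : Set α) (e : α) : Prop :=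
  X ⊆ E ∧ e ∈ E ∧ e ∉ X ∧ e ∈ closureOp K X ∧
    ∀ Y ⊆ X, e ∈ closureOp K Y → Y = X

/-- A convex geometry: a closure system in which every nonempty closed set has a
nonempty extreme set. -/
def IsConvexGeometry (E : Set α) (K : Set (Set α)) : Prop :=
  IsClosureSystem E K ∧ ∀ X ∈ K, X.Nonempty → (extremeOp K X).Nonempty

/-- A convex geometry has stem size 2 if every rooted circuit has stem of size 2. -/
def StemSize2 (E : Set α) (K : Set (Set α)) : Prop :=
  ∀ X e, IsRootedCircuit E K X e → X.ncard = 2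

/-- Rule Y: for pairwise distinct `x y z u`, if `({y,z}, u)` is a rooted circuit then
exactly one of `({x,y}, u)` and `({x,z}, u)` is a rooted circuit. -/
def RuleY (E : Set α) (K : Set (Set α)) : Prop :=
  ∀ x y z u : α, x ∈ E → y ∈ E → z ∈ E → u ∈ E →
    x ≠ y → x ≠ z → x ≠ u → y ≠ z → y ≠ u → z ≠ u →
    IsRootedCircuit E K {y, z} u →
    Xor' (IsRootedCircuit E K {x, y} u) (IsRootedCircuit E K {x, z} u)

/-- `F` is the edge set of a subtree (connected subgraph) of `G`, where the empty
set is included. -/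
def IsSubtreeEdgeSet {V : Type*} (G : SimpleGraph V) (F : Set (Sym2 V)) : Prop :=
  F = ∅ ∨ ∃ H : G.Subgraph, H.Connected ∧ H.edgeSet = F

/-- The edge-shelling convex geometry of a graph: the family of edge sets of subtrees. -/
def edgeShelling {V : Type*} (G : SimpleGraph V) : Set (Set (Sym2 V)) :=
  {F | IsSubtreeEdgeSet G F}

namespace EdgeShellingAux

open SimpleGraph

variable {V : Type*} {G : SimpleGraph V}

lemma singleton_mem_edgeShelling {c d : V} (h : G.Adj c d) :
    ({s(c, d)} : Set (Sym2 V)) ∈ edgeShelling G :=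
  Or.inr ⟨G.subgraphOfAdj h, Subgraph.subgraphOfAdj_connected h, edgeSet_subgraphOfAdj h⟩

/-- Every vertex is, after deleting the edge `s(a,b)`, still reachable from `a` or `b`,
provided it was reachable from `a`. -/
lemma walk_side_aux {a b v w : V} (p : G.Walk v w)
    (hv : (G.deleteEdges {s(a, b)}).Reachable v a ∨ (G.deleteEdges {s(a, b)}).Reachable v b) :
    (G.deleteEdges {s(a, b)}).Reachable w a ∨ (G.deleteEdges {s(a, b)}).Reachable w b := by
  induction p with
  | nil => exact hv
  | @cons v w' _ h p ih =>
    apply ih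
    by_cases he : s(v, w') = s(a, b)
    · rw [Sym2.eq_iff] at he
      rcases he with ⟨rfl, rfl⟩ | ⟨rfl, rfl⟩
      · exact Or.inr (Reachable.refl _)
      · exact Or.inl (Reachable.refl _)
    · have hvw : (G.deleteEdges {s(a, b)}).Adj v w' := by
        rw [deleteEdges_adj]
        exact ⟨h, by simpa using he⟩
      exact hv.imp (fun r => hvw.symm.reachable.trans r) (fun r => hvw.symm.reachable.trans r)

lemma walk_side {a b v : V} (p : G.Walk v a) :
    (G.deleteEdges {s(a, b)}).Reachable v a ∨ (G.deleteEdges {s(a, b)}).Reachable v b :=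
  walk_side_aux p.reverse (Or.inl (Reachable.refl _))

/-- If the two stem edges are on opposite sides of the bridge `s(a,b)`, then the
bridge is in the closure of the stem. -/
lemma mem_closure_of_opposite {a b c d e f : V} (hab : G.Adj a b)
    (hbr : ¬(G.deleteEdges {s(a, b)}).Reachable a b)
    (hcd : G.Adj c d) (hef : G.Adj e f)
    (hca : (G.deleteEdges {s(a, b)}).Reachable c a)
    (heb : (G.deleteEdges {s(a, b)}).Reachable e b) :
    s(a, b) ∈ closureOp (edgeShelling G) {s(c, d), s(e, f)} := by
  intro A hA
  obtain ⟨hAK, hsub⟩ := hA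
  rcases hAK with rfl | ⟨H, hHconn, rfl⟩
  · exact absurd (hsub (Set.mem_insert _ _)) (Set.notMem_empty _)
  · have hcdH : H.Adj c d := Subgraph.mem_edgeSet.mp (hsub (Set.mem_insert _ _))
    have hefH : H.Adj e f := Subgraph.mem_edgeSet.mp (hsub (Set.mem_insert_of_mem _ rfl))
    have hcH : c ∈ H.verts := hcdH.fst_mem
    have heH : e ∈ H.verts := hefH.fst_mem
    obtain ⟨w⟩ := hHconn.coe ⟨c, hcH⟩ ⟨e, heH⟩
    let p : G.Walk c e := w.map H.hom
    have hedges : ∀ e' ∈ p.edges, e' ∈ H.edgeSet := by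
      intro e' he'
      replace he' : e' ∈ (w.map H.hom).edges := he'
      rw [SimpleGraph.Walk.edges_map, List.mem_map] at he'
      obtain ⟨e0, he0, rfl⟩ := he'
      have h0 := w.edges_subset_edgeSet he0
      revert h0
      refine Sym2.ind (fun x y hxy => ?_) e0
      rw [SimpleGraph.mem_edgeSet] at hxy
      rw [Sym2.map_pair_eq]
      exact Subgraph.mem_edgeSet.mpr hxy
    by_cases hu : s(a, b) ∈ p.edges
    · exact hedges _ hu
    · exfalso
      have hp : ∀ e' ∈ p.edges, e' ∈ (G.deleteEdges {s(a, b)}).edgeSet := by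
        intro e' he'
        rw [edgeSet_deleteEdges]
        refine ⟨p.edges_subset_edgeSet he', ?_⟩
        simp only [Set.mem_singleton_iff]
        rintro rfl
        exact hu he'
      have hce : (G.deleteEdges {s(a, b)}).Reachable c e := ⟨p.transfer _ hp⟩
      exact hbr (hca.symm.trans (hce.trans heb))

/-- If the two stem edges are on the same side of the edge `s(a,b)` (their chosen
endpoints are reachable from one another after deleting the edge), the edge is not
in the closure of the stem. -/
lemma not_mem_closure_of_same {a b c d e f : V}
    (hcd : G.Adj c d) (hef : G.Adj e f)
    (h2 : s(a, b) ≠ s(c, d)) (h3 : s(a, b) ≠ s(e, f))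
    (hce : (G.deleteEdges {s(a, b)}).Reachable c e) :
    s(a, b) ∉ closureOp (edgeShelling G) {s(c, d), s(e, f)} := by
  obtain ⟨pw⟩ := hce
  have hp : ∀ e' ∈ pw.edges, e' ∈ G.edgeSet := fun e' he' =>
    (edgeSet_deleteEdges _ ▸ pw.edges_subset_edgeSet he').1
  let p : G.Walk c e := pw.transfer G hp
  set H : G.Subgraph := p.toSubgraph ⊔ G.subgraphOfAdj hcd ⊔ G.subgraphOfAdj hef with hH
  have hconn : H.Connected := by
    refine Subgraph.connected_sup ?_ (Subgraph.subgraphOfAdj_connected hef).preconnected ?_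
    · refine (Subgraph.connected_sup p.toSubgraph_connected.preconnected (Subgraph.subgraphOfAdj_connected hcd).preconnected ?_).preconnected
      refine ⟨c, ?_⟩
      rw [Subgraph.verts_inf]
      exact ⟨p.start_mem_verts_toSubgraph, Set.mem_insert _ _⟩
    · refine ⟨e, ?_⟩
      rw [Subgraph.verts_inf, Subgraph.verts_sup]
      exact ⟨Or.inl p.end_mem_verts_toSubgraph, Set.mem_insert _ _⟩
  intro hmem
  have hA : H.edgeSet ∈ {A | A ∈ edgeShelling G ∧ {s(c, d), s(e, f)} ⊆ A} := by
    refine ⟨Or.inr ⟨H, hconn, rfl⟩, ?_⟩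
    rintro t (rfl | rfl)
    · rw [hH, Subgraph.edgeSet_sup, Subgraph.edgeSet_sup]
      exact Or.inl (Or.inr (by rw [edgeSet_subgraphOfAdj]; rfl))
    · rw [hH, Subgraph.edgeSet_sup]
      exact Or.inr (by rw [edgeSet_subgraphOfAdj]; rfl)
  have := hmem _ hA
  rw [hH, Subgraph.edgeSet_sup, Subgraph.edgeSet_sup] at this
  rcases this with (h | h) | h
  · rw [Walk.edgeSet_toSubgraph] at h
    have hpe : p.edges = pw.edges := pw.edges_transfer hp
    have := pw.edges_subset_edgeSet (hpe ▸ Walk.mem_edgeSet.mp h)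
    rw [edgeSet_deleteEdges] at this
    exact this.2 rfl
  · rw [edgeSet_subgraphOfAdj] at h
    exact h2 h
  · rw [edgeSet_subgraphOfAdj] at h
    exact h3 h

/-- Construct a rooted circuit from two edges on opposite sides of a bridge. -/
lemma mk_circuit {a b c d e f : V} (hab : G.Adj a b)
    (hbr : ¬(G.deleteEdges {s(a, b)}).Reachable a b)
    (hcd : G.Adj c d) (hef : G.Adj e f)
    (h1 : s(c, d) ≠ s(e, f)) (h2 : s(a, b) ≠ s(c, d)) (h3 : s(a, b) ≠ s(e, f))
    (hca : (G.deleteEdges {s(a, b)}).Reachable c a)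
    (heb : (G.deleteEdges {s(a, b)}).Reachable e b) :
    IsRootedCircuit G.edgeSet (edgeShelling G) {s(c, d), s(e, f)} s(a, b) := by
  refine ⟨?_, hab, ?_, mem_closure_of_opposite hab hbr hcd hef hca heb, ?_⟩
  · rintro t (rfl | rfl)
    · exact hcd
    · exact hef
  · rintro (h | h)
    · exact h2 h
    · exact h3 h
  · intro Y hY hmem
    by_cases hc : s(c, d) ∈ Y
    · by_cases he : s(e, f) ∈ Y
      · refine Set.Subset.antisymm hY ?_
        rintro t (rfl | rfl) <;> assumption
      · exfalso
        have hY' : Y ⊆ {s(c, d)} := by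
          intro t ht
          rcases hY ht with rfl | rfl
          · rfl
          · exact absurd ht he
        exact h2 (hmem _ ⟨singleton_mem_edgeShelling hcd, hY'⟩)
    · exfalso
      have hY' : Y ⊆ {s(e, f)} := by
        intro t ht
        rcases hY ht with rfl | rfl
        · exact absurd ht hc
        · rfl
      exact h3 (hmem _ ⟨singleton_mem_edgeShelling hef, hY'⟩)

end EdgeShellingAux

open EdgeShellingAux SimpleGraph in
theorem stmt12 {V : Type*} [Fintype V] [Nonempty V] (G : SimpleGraph V) (hG : G.IsTree) :
    RuleY G.edgeSet (edgeShelling G) := by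
  intro x y z u hx hy hz hu hxy hxz hxu hyz hyu hzu hcirc
  induction u using Sym2.ind with | _ a b => ?_
  induction x using Sym2.ind with | _ x1 x2 => ?_
  induction y using Sym2.ind with | _ y1 y2 => ?_
  induction z using Sym2.ind with | _ z1 z2 => ?_
  have hab : G.Adj a b := hu
  have hxa : G.Adj x1 x2 := hx
  have hya : G.Adj y1 y2 := hy
  have hza : G.Adj z1 z2 := hz
  have hbr : ¬(G.deleteEdges {s(a, b)}).Reachable a b :=
    (isBridge_iff.mp ((isAcyclic_iff_forall_edge_isBridge.mp hG.IsAcyclic) hu))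
  -- sides
  have hside : ∀ v : V, (G.deleteEdges {s(a, b)}).Reachable v a ∨
      (G.deleteEdges {s(a, b)}).Reachable v b := by
    intro v
    obtain ⟨p⟩ := hG.isConnected.preconnected v a
    exact walk_side p
  have hnotboth : ∀ v : V, (G.deleteEdges {s(a, b)}).Reachable v a →
      (G.deleteEdges {s(a, b)}).Reachable v b → False :=
    fun v h1 h2 => hbr (h1.symm.trans h2)
  -- y and z are on opposite sides
  have hyz' : ¬(G.deleteEdges {s(a, b)}).Reachable y1 z1 := by
    intro h
    exact not_mem_closure_of_same hya hza hyu.symm hzu.symm h hcirc.2.2.2.1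
  rcases hside y1 with hy1 | hy1 <;> rcases hside z1 with hz1 | hz1
  · exact absurd (hy1.trans hz1.symm) hyz'
  · -- y on a-side, z on b-side
    rcases hside x1 with hx1 | hx1
    · -- x on a-side: ({x,z},u) is a circuit, ({x,y},u) is not
      refine Or.inr ⟨mk_circuit hab hbr hxa hza hxz hxu.symm hzu.symm hx1 hz1, ?_⟩
      intro hcx
      exact not_mem_closure_of_same hxa hya hxu.symm hyu.symm
        (hx1.trans hy1.symm) hcx.2.2.2.1
    · -- x on b-side: ({x,y},u) is a circuit, ({x,z},u) is not
      refine Or.inl ⟨?_, ?_⟩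
      · rw [Set.pair_comm]
        exact mk_circuit hab hbr hya hxa hxy.symm hyu.symm hxu.symm hy1 hx1
      · intro hcx
        exact not_mem_closure_of_same hxa hza hxu.symm hzu.symm
          (hx1.trans hz1.symm) hcx.2.2.2.1
  · -- y on b-side, z on a-side
    rcases hside x1 with hx1 | hx1
    · -- x on a-side: ({x,y},u) is a circuit, ({x,z},u) is not
      refine Or.inl ⟨mk_circuit hab hbr hxa hya hxy hxu.symm hyu.symm hx1 hy1, ?_⟩
      intro hcx
      exact not_mem_closure_of_same hxa hza hxu.symm hzu.symm
        (hx1.trans hz1.symm) hcx.2.2.2.1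
    · -- x on b-side: ({x,z},u) is a circuit, ({x,y},u) is not
      refine Or.inr ⟨?_, ?_⟩
      · rw [Set.pair_comm]
        exact mk_circuit hab hbr hza hxa hxz.symm hzu.symm hxu.symm hz1 hx1
      · intro hcx
        exact not_mem_closure_of_same hxa hya hxu.symm hyu.symm
          (hx1.trans hy1.symm) hcx.2.2.2.1
  · exact absurd (hy1.trans hz1.symm) hyz'
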